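/- In any ∂^ℤ-algebra A, the subset I := {f ∈ A : ∫(fg) = 0 for all g ∈ A} is an ideal of the ∂^ℤ-algebra A: it is an ℝ-subspace, a ring ideal of A (fh ∈ I for f ∈ I, h ∈ A), and ∂^m(I) ⊆ I for every m ∈ ℤ. -/

import Mathlib

/-- In any ∂^ℤ-algebra `A`, the set `I := {f | ∫(f g) = 0 for all g}` is an ideal of the
∂^ℤ-algebra `A`: an ℝ-subspace, a ring ideal, closed under every `∂^m`.
Here `∫ f := f - ∂⁰ f`. -/
theorem dZ_algebra_trace_null_ideal
    {A : Type*} [CommRing A] [Algebra ℝ A]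
    (D : ℤ → A →ₗ[ℝ] A)
    (hD_comp : ∀ (m n : ℤ) (f : A), D m (D n f) = D (m + n) f)
    (hD_leibniz : ∀ f g : A, D 1 (f * g) = D 1 f * g + f * D 1 g)
    (hD_parts : ∀ f g : A, D (-1) ((f - D 0 f) * g) = (f - D 0 f) * D (-1) g)
    (I : Set A) (hI : I = {f : A | ∀ g : A, f * g - D 0 (f * g) = 0}) :
    (∀ f ∈ I, ∀ g ∈ I, f + g ∈ I)
    ∧ (∀ (r : ℝ), ∀ f ∈ I, r • f ∈ I)
    ∧ (∀ f ∈ I, ∀ h : A, f * h ∈ I)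
    ∧ (∀ (m : ℤ), ∀ f ∈ I, D m f ∈ I) := by
  subst hI
  -- ∫ ∘ Dm = 0 for every m, since D0 (Dm x) = Dm x
  have hIm : ∀ (m : ℤ) (x : A), D m x - D 0 (D m x) = 0 := by
    intro m x
    rw [hD_comp 0 m x, zero_add, sub_self]
  -- closure of I under D 1, via Leibniz
  have hstep1 : ∀ u : A, (∀ g, u * g - D 0 (u * g) = 0) →
      ∀ g, D 1 u * g - D 0 (D 1 u * g) = 0 := by
    intro u hu g
    have hl := hD_leibniz u g
    have hd := congrArg (D 0) hl
    rw [map_add] at hd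
    have key : D 1 u * g - D 0 (D 1 u * g)
        = (D 1 (u * g) - D 0 (D 1 (u * g))) - (u * D 1 g - D 0 (u * D 1 g)) := by
      linear_combination hd - hl
    rw [key, hIm 1 (u * g), hu (D 1 g), sub_zero]
  -- closure of I under D (-1)
  have hstepm : ∀ u : A, (∀ g, u * g - D 0 (u * g) = 0) →
      ∀ g, D (-1) u * g - D 0 (D (-1) u * g) = 0 := by
    intro u hu g
    have hu0 : u = D 0 u := by simpa [sub_eq_zero] using hu 1
    -- split g = D0 g + ∫g
    -- part 1 : ∫(D(-1)u * D0 g) = 0, via Leibniz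
    have hx : D 1 (D (-1) g) = D 0 g := by rw [hD_comp]; norm_num
    have hw : D 1 (D (-1) u) = u := by rw [hD_comp]; norm_num; exact hu0.symm
    have hl := hD_leibniz (D (-1) u) (D (-1) g)
    rw [hx, hw] at hl
    have hd := congrArg (D 0) hl
    rw [map_add] at hd
    have h1 : D (-1) u * D 0 g - D 0 (D (-1) u * D 0 g)
        = (D 1 (D (-1) u * D (-1) g) - D 0 (D 1 (D (-1) u * D (-1) g)))
          - (u * D (-1) g - D 0 (u * D (-1) g)) := by
      linear_combination hd - hl
    rw [hIm 1 (D (-1) u * D (-1) g), hu (D (-1) g), sub_zero] at h1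
    -- part 2 : ∫(D(-1)u * ∫g) = 0, via integration by parts
    have hp := hD_parts g u
    have h2 : D (-1) u * (g - D 0 g) - D 0 (D (-1) u * (g - D 0 g)) = 0 := by
      have : D (-1) u * (g - D 0 g) = D (-1) ((g - D 0 g) * u) := by
        rw [hp]; ring
      rw [this]; exact hIm (-1) _
    -- combine
    have hsum := congrArg (D 0) (mul_sub (D (-1) u) g (D 0 g))
    rw [map_sub] at hsum
    have hgoal : D (-1) u * g - D 0 (D (-1) u * g)
        = (D (-1) u * (g - D 0 g) - D 0 (D (-1) u * (g - D 0 g)))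
          + (D (-1) u * D 0 g - D 0 (D (-1) u * D 0 g)) := by
      linear_combination hsum
    rw [hgoal, h1, h2, add_zero]
  refine ⟨?_, ?_, ?_, ?_⟩
  · intro f hf g hg h
    have h1 := hf h
    have h2 := hg h
    have hd := congrArg (D 0) (add_mul f g h)
    rw [map_add] at hd
    linear_combination h1 + h2 - hd
  · intro r f hf g
    rw [smul_mul_assoc, map_smul, ← smul_sub, hf g, smul_zero]
  · intro f hf h g
    rw [mul_assoc]
    exact hf (h * g)
  · intro m f hf
    induction m using Int.induction_on with
    | zero =>
      have hf0 : f = D 0 f := by simpa [sub_eq_zero] using hf 1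
      intro g; rw [← hf0]; exact hf g
    | succ k ih =>
      have : D ((k : ℤ) + 1) f = D 1 (D k f) := by rw [hD_comp]; ring_nf
      rw [this]
      exact hstep1 _ ih
    | pred k ih =>
      have : D (-(k : ℤ) - 1) f = D (-1) (D (-k) f) := by rw [hD_comp]; ring_nf
      rw [this]
      exact hstepm _ ih
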